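/- For every CGS G, every BSL state formula φ, every assignment χ for φ, and every state q: G, χ, q ⊨_BSL φ if and only if G, χ, q ⊨_SL tr_{Ag ∖ dom(χ)}(φ). -/

import Mathlib

/-- A concurrent game structure: transition function, initial state, valuation. -/
structure CGS (S Ag Act AP : Type) where
  δ : S → (Ag → Act) → S
  init : S
  val : S → AP → Prop

variable {S Ag Act AP Var : Type}

/-- An initial (finite) path: a start state together with the list of decisions taken. -/
abbrev FPath (S Ag Act : Type) := S × List (Ag → Act)

/-- Last state of an initial path. -/
def CGS.lastState (G : CGS S Ag Act AP) (ρ : FPath S Ag Act) : S :=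
  ρ.2.foldl G.δ ρ.1

/-- A strategy assigns an action to every initial path. -/
abbrev Strat (S Ag Act : Type) := FPath S Ag Act → Act

/-- Concatenation of initial paths (meaningful when `G.lastState ρ = ρ'.1`,
i.e. they are glued at the shared state). -/
def FPath.concat (ρ ρ' : FPath S Ag Act) : FPath S Ag Act := (ρ.1, ρ.2 ++ ρ'.2)

/-- The finite prefix with `n` decisions of the play from `q` whose decision stream is `d`. -/
def prefixPath (q : S) (d : ℕ → Ag → Act) (n : ℕ) : FPath S Ag Act :=
  (q, List.ofFn fun i : Fin n => d i)

/-- The state reached after `i` steps of the play from `q` with decision stream `d`. -/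
def stateAt (G : CGS S Ag Act AP) (q : S) (d : ℕ → Ag → Act) (i : ℕ) : S :=
  G.lastState (prefixPath q d i)

/-- An assignment: a partial map from agents and variables to strategies. -/
abbrev Assign (S Ag Act Var : Type) := Ag ⊕ Var → Option (Strat S Ag Act)

/-- The outcome of an assignment from a state: the set of plays (identified with
their decision streams) compatible with all strategies assigned to agents. -/
def outcome (G : CGS S Ag Act AP) (q : S) (χ : Assign S Ag Act Var) :
    Set (ℕ → Ag → Act) :=
  {d | ∀ (k : ℕ) (a : Ag) (σ : Strat S Ag Act),
      χ (Sum.inl a) = some σ → d k a = σ (prefixPath q d k)}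

/-- The `ρ`-translation of a strategy. -/
def transStrat [DecidableEq S] (G : CGS S Ag Act AP) (ρ : FPath S Ag Act)
    (σ : Strat S Ag Act) : Strat S Ag Act :=
  fun ρ' => if ρ'.1 = G.lastState ρ then σ (ρ.concat ρ') else σ ρ'

/-- The `ρ`-translation of an assignment. -/
def transAssign [DecidableEq S] (G : CGS S Ag Act AP) (ρ : FPath S Ag Act)
    (χ : Assign S Ag Act Var) : Assign S Ag Act Var :=
  fun l => (χ l).map (transStrat G ρ)

/-- Syntax of Strategy Logic (SL). -/
inductive SLForm (AP Ag Var : Type) : Type where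
  | atom : AP → SLForm AP Ag Var
  | neg  : SLForm AP Ag Var → SLForm AP Ag Var
  | or   : SLForm AP Ag Var → SLForm AP Ag Var → SLForm AP Ag Var
  | next : SLForm AP Ag Var → SLForm AP Ag Var
  | untl : SLForm AP Ag Var → SLForm AP Ag Var → SLForm AP Ag Var
  | exi  : Var → SLForm AP Ag Var → SLForm AP Ag Var
  | bind : Ag → Var → SLForm AP Ag Var → SLForm AP Ag Var

mutual
/-- State formulas of Branching-time Strategy Logic (BSL). -/
inductive BSLForm (AP Ag Var : Type) : Type where
  | atom : AP → BSLForm AP Ag Var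
  | neg  : BSLForm AP Ag Var → BSLForm AP Ag Var
  | or   : BSLForm AP Ag Var → BSLForm AP Ag Var → BSLForm AP Ag Var
  | exi  : Var → BSLForm AP Ag Var → BSLForm AP Ag Var
  | bind : Ag → Var → BSLForm AP Ag Var → BSLForm AP Ag Var
  | unbind : Ag → BSLForm AP Ag Var → BSLForm AP Ag Var
  | pathE : BSLPath AP Ag Var → BSLForm AP Ag Var
/-- Path formulas of BSL. -/
inductive BSLPath (AP Ag Var : Type) : Type where
  | state : BSLForm AP Ag Var → BSLPath AP Ag Var
  | neg   : BSLPath AP Ag Var → BSLPath AP Ag Var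
  | or    : BSLPath AP Ag Var → BSLPath AP Ag Var → BSLPath AP Ag Var
  | next  : BSLPath AP Ag Var → BSLPath AP Ag Var
  | untl  : BSLPath AP Ag Var → BSLPath AP Ag Var → BSLPath AP Ag Var
end

/-- Semantics of SL. Temporal operators are evaluated on an outcome play of the
current assignment (for complete assignments — the only case where the SL
semantics is defined — this play is unique), with the assignment translated
along the play. -/
def SLsat [DecidableEq S] [DecidableEq Ag] [DecidableEq Var] (G : CGS S Ag Act AP) :
    Assign S Ag Act Var → S → SLForm AP Ag Var → Prop
  | χ, q, .atom p => G.val q p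
  | χ, q, .neg φ => ¬ SLsat G χ q φ
  | χ, q, .or φ φ' => SLsat G χ q φ ∨ SLsat G χ q φ'
  | χ, q, .exi x φ =>
      ∃ σ : Strat S Ag Act, SLsat G (Function.update χ (Sum.inr x) (some σ)) q φ
  | χ, q, .bind a x φ => SLsat G (Function.update χ (Sum.inl a) (χ (Sum.inr x))) q φ
  | χ, q, .next φ => ∃ d ∈ outcome G q χ,
      SLsat G (transAssign G (prefixPath q d 1) χ) (stateAt G q d 1) φ
  | χ, q, .untl φ φ' => ∃ d ∈ outcome G q χ, ∃ j : ℕ,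
      SLsat G (transAssign G (prefixPath q d j) χ) (stateAt G q d j) φ' ∧
      ∀ k < j, SLsat G (transAssign G (prefixPath q d k) χ) (stateAt G q d k) φ

mutual
/-- Semantics of BSL state formulas, at a state under an assignment. -/
def BSLsat [DecidableEq S] [DecidableEq Ag] [DecidableEq Var] (G : CGS S Ag Act AP)
    (χ : Assign S Ag Act Var) (q : S) : BSLForm AP Ag Var → Prop
  | .atom p => G.val q p
  | .neg φ => ¬ BSLsat G χ q φ
  | .or φ φ' => BSLsat G χ q φ ∨ BSLsat G χ q φ'
  | .exi x φ =>
      ∃ σ : Strat S Ag Act, BSLsat G (Function.update χ (Sum.inr x) (some σ)) q φ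
  | .bind a x φ => BSLsat G (Function.update χ (Sum.inl a) (χ (Sum.inr x))) q φ
  | .unbind a φ => BSLsat G (Function.update χ (Sum.inl a) none) q φ
  | .pathE ψ => ∃ d ∈ outcome G q χ, BSLsatP G χ q d 0 ψ

/-- Semantics of BSL path formulas, on the play from `q` with decision stream
`d`, at position `i`; the assignment is translated by the prefix as state
formulas are evaluated. -/
def BSLsatP [DecidableEq S] [DecidableEq Ag] [DecidableEq Var] (G : CGS S Ag Act AP)
    (χ : Assign S Ag Act Var) (q : S) (d : ℕ → Ag → Act) (i : ℕ) :
    BSLPath AP Ag Var → Prop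
  | .state φ => BSLsat G (transAssign G (prefixPath q d i) χ) (stateAt G q d i) φ
  | .neg ψ => ¬ BSLsatP G χ q d i ψ
  | .or ψ ψ' => BSLsatP G χ q d i ψ ∨ BSLsatP G χ q d i ψ'
  | .next ψ => BSLsatP G χ q d (i + 1) ψ
  | .untl ψ ψ' => ∃ j, i ≤ j ∧ BSLsatP G χ q d j ψ' ∧
      ∀ k, i ≤ k → k < j → BSLsatP G χ q d k ψ
end

/-- Free variables of an SL formula. -/
def SLfree : SLForm AP Ag Var → Set Var
  | .atom _ => ∅
  | .neg φ => SLfree φ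
  | .or φ φ' => SLfree φ ∪ SLfree φ'
  | .next φ => SLfree φ
  | .untl φ φ' => SLfree φ ∪ SLfree φ'
  | .exi x φ => SLfree φ \ {x}
  | .bind _ x φ => insert x (SLfree φ)

mutual
/-- Free variables of a BSL state formula. -/
def BSLfree : BSLForm AP Ag Var → Set Var
  | .atom _ => ∅
  | .neg φ => BSLfree φ
  | .or φ φ' => BSLfree φ ∪ BSLfree φ'
  | .exi x φ => BSLfree φ \ {x}
  | .bind _ x φ => insert x (BSLfree φ)
  | .unbind _ φ => BSLfree φ
  | .pathE ψ => BSLfreeP ψ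
/-- Free variables of a BSL path formula. -/
def BSLfreeP : BSLPath AP Ag Var → Set Var
  | .state φ => BSLfree φ
  | .neg ψ => BSLfreeP ψ
  | .or ψ ψ' => BSLfreeP ψ ∪ BSLfreeP ψ'
  | .next ψ => BSLfreeP ψ
  | .untl ψ ψ' => BSLfreeP ψ ∪ BSLfreeP ψ'
end

/-- `SLdefFor A φ` holds when the SL semantics of `φ` is defined in every
assignment whose agent-domain is `A`: every temporal operator is only
evaluated under a complete assignment (every agent being bound on the way). -/
def SLdefFor (A : Set Ag) : SLForm AP Ag Var → Prop
  | .atom _ => True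
  | .neg φ => SLdefFor A φ
  | .or φ φ' => SLdefFor A φ ∧ SLdefFor A φ'
  | .exi _ φ => SLdefFor A φ
  | .bind a _ φ => SLdefFor (insert a A) φ
  | .next φ => A = Set.univ ∧ SLdefFor A φ
  | .untl φ φ' => A = Set.univ ∧ SLdefFor A φ ∧ SLdefFor A φ'

/-- The translation `tr : SL → BSL`, inserting a path quantifier in front of
each temporal operator and homomorphic elsewhere. -/
def tr : SLForm AP Ag Var → BSLForm AP Ag Var
  | .atom p => .atom p
  | .neg φ => .neg (tr φ)
  | .or φ φ' => .or (tr φ) (tr φ')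
  | .next φ => .pathE (.next (.state (tr φ)))
  | .untl φ φ' => .pathE (.untl (.state (tr φ)) (.state (tr φ')))
  | .exi x φ => .exi x (tr φ)
  | .bind a x φ => .bind a x (tr φ)

mutual
/-- `φ` avoids the fresh variables (those of the form `Sum.inr a`) used by the
translation `tr_A`. -/
def BSLavoidsFresh : BSLForm AP Ag (Var ⊕ Ag) → Prop
  | .atom _ => True
  | .neg φ => BSLavoidsFresh φ
  | .or φ φ' => BSLavoidsFresh φ ∧ BSLavoidsFresh φ'
  | .exi x φ => x.isLeft ∧ BSLavoidsFresh φ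
  | .bind _ x φ => x.isLeft ∧ BSLavoidsFresh φ
  | .unbind _ φ => BSLavoidsFresh φ
  | .pathE ψ => BSLavoidsFreshP ψ
def BSLavoidsFreshP : BSLPath AP Ag (Var ⊕ Ag) → Prop
  | .state φ => BSLavoidsFresh φ
  | .neg ψ => BSLavoidsFreshP ψ
  | .or ψ ψ' => BSLavoidsFreshP ψ ∧ BSLavoidsFreshP ψ'
  | .next ψ => BSLavoidsFreshP ψ
  | .untl ψ ψ' => BSLavoidsFreshP ψ ∧ BSLavoidsFreshP ψ'
end

/-- Prefix a formula with the bindings `(a, x_a)` for all agents `a` in `l`. -/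
def bindList (l : List Ag) (φ : SLForm AP Ag (Var ⊕ Ag)) : SLForm AP Ag (Var ⊕ Ag) :=
  l.foldr (fun a ψ => .bind a (Sum.inr a) ψ) φ

/-- Prefix a formula with the strategy quantifications `⟨⟨x_a⟩⟩` for `a ∈ l`. -/
def quantList (l : List Ag) (φ : SLForm AP Ag (Var ⊕ Ag)) : SLForm AP Ag (Var ⊕ Ag) :=
  l.foldr (fun a ψ => .exi (Sum.inr a) ψ) φ

noncomputable section

mutual
/-- The translation `tr_A : BSL → SL`, parameterized by the set `A` of
currently unbound agents; each fresh variable for agent `a` is `Sum.inr a`. -/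
def trA [DecidableEq Ag] (A : Finset Ag) :
    BSLForm AP Ag (Var ⊕ Ag) → SLForm AP Ag (Var ⊕ Ag)
  | .atom p => .atom p
  | .neg φ => .neg (trA A φ)
  | .or φ φ' => .or (trA A φ) (trA A φ')
  | .exi x φ => .exi x (trA A φ)
  | .bind a x φ => .bind a x (trA (A.erase a) φ)
  | .unbind a φ => trA (insert a A) φ
  | .pathE ψ => quantList A.toList (bindList A.toList (trAP A ψ))
/-- The homomorphic extension of `tr_A` to BSL path formulas. -/
def trAP [DecidableEq Ag] (A : Finset Ag) :
    BSLPath AP Ag (Var ⊕ Ag) → SLForm AP Ag (Var ⊕ Ag)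
  | .state φ => trA A φ
  | .neg ψ => .neg (trAP A ψ)
  | .or ψ ψ' => .or (trAP A ψ) (trAP A ψ')
  | .next ψ => .next (trAP A ψ)
  | .untl ψ ψ' => .untl (trAP A ψ) (trAP A ψ')
end
end


set_option linter.unusedVariables false
set_option linter.unusedSectionVars false
set_option maxHeartbeats 1000000

section Lemmas

variable [DecidableEq S] [DecidableEq Ag] [DecidableEq Var]
variable (G : CGS S Ag Act AP)

/-- Restriction of an assignment to histories rooted at `q`. -/
def restrictQ (q : S) (χ : Assign S Ag Act Var) :
    Ag ⊕ Var → Option (List (Ag → Act) → Act) :=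
  fun l => (χ l).map (fun σ tl => σ (q, tl))

lemma prefixPath_zero (q : S) (d : ℕ → Ag → Act) :
    prefixPath q d 0 = (q, ([] : List (Ag → Act))) := by
  simp [prefixPath]

lemma prefixPath_fst (q : S) (d : ℕ → Ag → Act) (n : ℕ) :
    (prefixPath q d n : FPath S Ag Act).1 = q := rfl

lemma prefixPath_len (q : S) (d : ℕ → Ag → Act) (n : ℕ) :
    (prefixPath q d n : FPath S Ag Act).2.length = n := by
  simp [prefixPath]

lemma transStrat_nil (q : S) :
    transStrat G (q, ([] : List (Ag → Act))) = (id : Strat S Ag Act → _) := by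
  funext σ ρ'
  simp only [transStrat, CGS.lastState, FPath.concat, List.foldl_nil, List.nil_append, id]
  by_cases h : ρ'.1 = q
  · subst h; simp
  · simp [h]

lemma transAssign_zero (q : S) (d : ℕ → Ag → Act) (χ : Assign S Ag Act Var) :
    transAssign G (prefixPath q d 0) χ = χ := by
  funext l
  rw [transAssign, prefixPath_zero, transStrat_nil]
  cases χ l <;> rfl

lemma lastState_concat (ρ ρ' : FPath S Ag Act) (h : ρ'.1 = G.lastState ρ) :
    G.lastState (ρ.concat ρ') = G.lastState ρ' := by
  simp only [CGS.lastState, FPath.concat, List.foldl_append]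
  rw [show List.foldl G.δ ρ.1 ρ.2 = ρ'.1 from h.symm]

lemma prefixPath_concat (q : S) (d : ℕ → Ag → Act) (i j : ℕ) (q' : S) :
    (prefixPath q d i : FPath S Ag Act).concat
      (prefixPath q' (fun k => d (i + k)) j) = prefixPath q d (i + j) := by
  simp only [FPath.concat, prefixPath, Prod.mk.injEq, true_and]
  rw [List.ofFn_add]
  simp

lemma stateAt_add (q : S) (d : ℕ → Ag → Act) (i j : ℕ) :
    stateAt G (stateAt G q d i) (fun k => d (i + k)) j = stateAt G q d (i + j) := by
  simp only [stateAt]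
  rw [← prefixPath_concat q d i j (G.lastState (prefixPath q d i)),
    lastState_concat G _ _ rfl]

end Lemmas

section Lemmas2

variable [DecidableEq S] [DecidableEq Ag] [DecidableEq Var]
variable (G : CGS S Ag Act AP)

lemma prefixPath_congr (q : S) (d d' : ℕ → Ag → Act) (k : ℕ)
    (h : ∀ j < k, d j = d' j) :
    prefixPath q d k = (prefixPath q d' k : FPath S Ag Act) := by
  simp only [prefixPath, Prod.mk.injEq, true_and]
  congr 1
  funext i
  exact h i i.2

/-- Uniqueness of outcome plays for complete assignments. -/
lemma outcome_unique (q : S) (χ : Assign S Ag Act Var)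
    (hc : ∀ a, (χ (Sum.inl a)).isSome) (d d' : ℕ → Ag → Act)
    (hd : d ∈ outcome G q χ) (hd' : d' ∈ outcome G q χ) : d = d' := by
  funext k
  induction k using Nat.strong_induction_on with
  | _ k ih =>
    funext a
    obtain ⟨σ, hσ⟩ := Option.isSome_iff_exists.mp (hc a)
    rw [hd k a σ hσ, hd' k a σ hσ, prefixPath_congr q d d' k ih]

/-- Existence of outcome plays for complete assignments. -/
lemma outcome_exists (q : S) (χ : Assign S Ag Act Var)
    (hc : ∀ a, (χ (Sum.inl a)).isSome) : ∃ d, d ∈ outcome G q χ := by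
  classical
  let step : List (Ag → Act) → Ag → Act := fun l a => ((χ (Sum.inl a)).get (hc a)) (q, l)
  let decs : ℕ → List (Ag → Act) := fun k => Nat.rec [] (fun _ l => l ++ [step l]) k
  refine ⟨fun k => step (decs k), ?_⟩
  have hpre : ∀ k, prefixPath q (fun k => step (decs k)) k = (q, decs k) := by
    intro k
    induction k with
    | zero => exact prefixPath_zero q _
    | succ k ih =>
      simp only [prefixPath, Prod.mk.injEq, true_and] at ih ⊢
      rw [List.ofFn_succ']
      simp only [Fin.coe_castSucc, Fin.val_last, List.concat_eq_append, ih]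
      rfl
  intro k a σ hσ
  rw [hpre k]
  have : σ = (χ (Sum.inl a)).get (hc a) := by simp [hσ]
  rw [this]

/-- Shifting an outcome play along a prefix. -/
lemma outcome_shift (q : S) (χ : Assign S Ag Act Var) (d : ℕ → Ag → Act)
    (hd : d ∈ outcome G q χ) (i : ℕ) :
    (fun k => d (i + k)) ∈ outcome G (stateAt G q d i) (transAssign G (prefixPath q d i) χ) := by
  intro k a σ' hσ'
  simp only [transAssign, Option.map_eq_some_iff] at hσ'
  obtain ⟨σ, hσ, rfl⟩ := hσ'
  show d (i + k) a = _
  rw [hd (i + k) a σ hσ]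
  simp only [transStrat, prefixPath_fst, stateAt]
  rw [if_pos trivial, prefixPath_concat q d i k]

lemma transAssign_isSome (ρ : FPath S Ag Act) (χ : Assign S Ag Act Var) (l : Ag ⊕ Var) :
    ((transAssign G ρ χ) l).isSome = (χ l).isSome := by
  simp [transAssign]

lemma transAssign_isNone (ρ : FPath S Ag Act) (χ : Assign S Ag Act Var) (l : Ag ⊕ Var) :
    ((transAssign G ρ χ) l).isNone = (χ l).isNone := by
  simp [transAssign]

lemma restrictQ_transAssign (ρ : FPath S Ag Act) (χ : Assign S Ag Act Var)
    (l : Ag ⊕ Var) :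
    restrictQ (G.lastState ρ) (transAssign G ρ χ) l
      = (χ l).map (fun σ tl => σ (ρ.1, ρ.2 ++ tl)) := by
  simp only [restrictQ, transAssign, Option.map_map]
  cases χ l with
  | none => rfl
  | some σ =>
    simp only [Option.map_some, Function.comp]
    congr 1
    funext tl
    simp [transStrat, FPath.concat]

/-- Composition of translations, up to restriction at the final state. -/
lemma restrictQ_transAssign_comp (ρ ρ' : FPath S Ag Act) (χ : Assign S Ag Act Var)
    (h : ρ'.1 = G.lastState ρ) :
    restrictQ (G.lastState ρ') (transAssign G ρ' (transAssign G ρ χ))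
      = restrictQ (G.lastState (ρ.concat ρ')) (transAssign G (ρ.concat ρ') χ) := by
  funext l
  conv_lhs => rw [restrictQ_transAssign]
  conv_rhs => rw [restrictQ_transAssign]
  rw [transAssign, Option.map_map]
  cases χ l with
  | none => rfl
  | some σ =>
    simp only [Option.map_some, Function.comp]
    congr 1
    funext tl
    simp only [transStrat, FPath.concat, h]
    simp [List.append_assoc]

end Lemmas2

section Lemmas3

variable [DecidableEq S] [DecidableEq Ag] [DecidableEq Var]
variable (G : CGS S Ag Act AP)

lemma restrictQ_update (q : S) (χ : Assign S Ag Act Var) (l : Ag ⊕ Var)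
    (v : Option (Strat S Ag Act)) :
    restrictQ q (Function.update χ l v)
      = Function.update (restrictQ q χ) l (v.map (fun σ tl => σ (q, tl))) := by
  funext l'
  by_cases h : l' = l
  · subst h; simp [restrictQ]
  · simp [restrictQ, Function.update_of_ne h]

lemma outcome_congr (q : S) (χ χ' : Assign S Ag Act Var)
    (h : ∀ a, restrictQ q χ (Sum.inl a) = restrictQ q χ' (Sum.inl a)) :
    outcome G q χ = outcome G q χ' := by
  have key : ∀ (χ χ' : Assign S Ag Act Var),
      (∀ a, restrictQ q χ (Sum.inl a) = restrictQ q χ' (Sum.inl a)) →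
      outcome G q χ ⊆ outcome G q χ' := by
    intro χ χ' h d hd k a σ' hσ'
    have h' := h a
    rw [restrictQ, restrictQ, hσ'] at h'
    cases hχ : χ (Sum.inl a) with
    | none => rw [hχ] at h'; simp at h'
    | some σ =>
      rw [hχ] at h'
      simp only [Option.map_some] at h'
      have hfun : (fun tl => σ (q, tl)) = (fun tl => σ' (q, tl)) := by
        injection h'
      rw [hd k a σ hχ]
      show σ (q, _) = σ' (q, _)
      exact congrFun hfun _
  exact Set.Subset.antisymm (key _ _ h) (key _ _ fun a => (h a).symm)

lemma restrictQ_trans_congr (q : S) (χ χ' : Assign S Ag Act Var)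
    (ρ : FPath S Ag Act) (hρ : ρ.1 = q) (l : Ag ⊕ Var)
    (h : restrictQ q χ l = restrictQ q χ' l) :
    restrictQ (G.lastState ρ) (transAssign G ρ χ) l
      = restrictQ (G.lastState ρ) (transAssign G ρ χ') l := by
  rw [restrictQ_transAssign, restrictQ_transAssign]
  have : ∀ (ξ : Assign S Ag Act Var),
      (ξ l).map (fun σ tl => σ (ρ.1, ρ.2 ++ tl))
        = (restrictQ q ξ l).map (fun g tl => g (ρ.2 ++ tl)) := by
    intro ξ
    rw [restrictQ, Option.map_map, hρ]
    rfl
  rw [this χ, this χ', h]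

/-- SL satisfaction only depends on the restriction of the assignment to
histories rooted at the current state, and only on free variables. -/
lemma SLsat_congr (φ : SLForm AP Ag Var) :
    ∀ (χ χ' : Assign S Ag Act Var) (q : S),
    (∀ a, restrictQ q χ (Sum.inl a) = restrictQ q χ' (Sum.inl a)) →
    (∀ x ∈ SLfree φ, restrictQ q χ (Sum.inr x) = restrictQ q χ' (Sum.inr x)) →
    (SLsat G χ q φ ↔ SLsat G χ' q φ) := by
  induction φ with
  | atom p => intro χ χ' q hA hV; rfl
  | neg φ ih =>
    intro χ χ' q hA hV
    exact not_congr (ih χ χ' q hA hV)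
  | or φ φ' ih ih' =>
    intro χ χ' q hA hV
    exact or_congr (ih χ χ' q hA fun x hx => hV x (Or.inl hx))
      (ih' χ χ' q hA fun x hx => hV x (Or.inr hx))
  | exi x φ ih =>
    intro χ χ' q hA hV
    simp only [SLsat]
    apply exists_congr
    intro σ
    apply ih
    · intro a
      rw [restrictQ_update, restrictQ_update]
      simp only [Function.update]
      split
      · rfl
      · exact hA a
    · intro y hy
      rw [restrictQ_update, restrictQ_update]
      by_cases hxy : (Sum.inr y : Ag ⊕ Var) = Sum.inr x
      · rw [hxy]; simp
      · rw [Function.update_of_ne hxy, Function.update_of_ne hxy]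
        exact hV y ⟨hy, by simpa using hxy⟩
  | bind a x φ ih =>
    intro χ χ' q hA hV
    simp only [SLsat]
    apply ih
    · intro b
      rw [restrictQ_update, restrictQ_update]
      simp only [Function.update]
      split
      · have := hV x (Set.mem_insert _ _)
        rw [restrictQ, restrictQ] at this
        rw [this]
      · exact hA b
    · intro y hy
      rw [restrictQ_update, restrictQ_update,
        Function.update_of_ne (by simp), Function.update_of_ne (by simp)]
      exact hV y (Set.mem_insert_of_mem _ hy)
  | next φ ih =>
    intro χ χ' q hA hV
    simp only [SLsat]
    rw [outcome_congr G q χ χ' hA]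
    apply exists_congr; intro d
    apply and_congr_right; intro hd
    apply ih
    · intro b
      exact restrictQ_trans_congr G q χ χ' (prefixPath q d 1) rfl _ (hA b)
    · intro y hy
      exact restrictQ_trans_congr G q χ χ' (prefixPath q d 1) rfl _ (hV y hy)
  | untl φ φ' ih ih' =>
    intro χ χ' q hA hV
    simp only [SLsat]
    rw [outcome_congr G q χ χ' hA]
    apply exists_congr; intro d
    apply and_congr_right; intro hd
    apply exists_congr; intro j
    apply and_congr
    · apply ih'
      · intro b
        exact restrictQ_trans_congr G q χ χ' (prefixPath q d j) rfl _ (hA b)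
      · intro y hy
        exact restrictQ_trans_congr G q χ χ' (prefixPath q d j) rfl _ (hV y (Or.inr hy))
    · apply forall_congr'; intro k
      apply forall_congr'; intro hk
      apply ih
      · intro b
        exact restrictQ_trans_congr G q χ χ' (prefixPath q d k) rfl _ (hA b)
      · intro y hy
        exact restrictQ_trans_congr G q χ χ' (prefixPath q d k) rfl _ (hV y (Or.inl hy))

end Lemmas3

section Lemmas4

variable [DecidableEq Ag]

lemma SLfree_bindList (l : List Ag) (θ : SLForm AP Ag (Var ⊕ Ag)) :
    SLfree (bindList l θ) ⊆ {x | ∃ a ∈ l, x = Sum.inr a} ∪ SLfree θ := by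
  induction l with
  | nil => simp [bindList]
  | cons a l ih =>
    intro x hx
    simp only [bindList, List.foldr_cons, SLfree] at hx
    rcases hx with rfl | hx
    · exact Or.inl ⟨a, by simp⟩
    · rcases ih hx with h | h
      · obtain ⟨c, hc, rfl⟩ := h
        exact Or.inl ⟨c, by simp [hc]⟩
      · exact Or.inr h

lemma SLfree_quantList (l : List Ag) (θ : SLForm AP Ag (Var ⊕ Ag)) :
    SLfree (quantList l θ) ⊆ SLfree θ \ {x | ∃ a ∈ l, x = Sum.inr a} := by
  induction l with
  | nil => simp [quantList]
  | cons a l ih =>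
    intro x hx
    simp only [quantList, List.foldr_cons, SLfree, Set.mem_diff] at hx
    obtain ⟨hx1, hx2⟩ := hx
    obtain ⟨h1, h2⟩ := ih hx1
    refine ⟨h1, ?_⟩
    rintro ⟨c, hc, rfl⟩
    rcases List.mem_cons.mp hc with rfl | hc
    · exact hx2 rfl
    · exact h2 ⟨c, hc, rfl⟩

mutual
theorem trA_no_fresh : ∀ (φ : BSLForm AP Ag (Var ⊕ Ag)) (A : Finset Ag),
    BSLavoidsFresh φ → ∀ b : Ag, (Sum.inr b : Var ⊕ Ag) ∉ SLfree (trA A φ)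
  | .atom p, A, h, b => by simp [trA, SLfree]
  | .neg φ, A, h, b => by
    simpa [trA, SLfree] using trA_no_fresh φ A h b
  | .or φ φ', A, h, b => by
    simp only [trA, SLfree, Set.mem_union]
    rintro (hx | hx)
    · exact trA_no_fresh φ A h.1 b hx
    · exact trA_no_fresh φ' A h.2 b hx
  | .exi x φ, A, h, b => by
    simp only [trA, SLfree, Set.mem_diff]
    rintro ⟨hx, -⟩
    exact trA_no_fresh φ A h.2 b hx
  | .bind a x φ, A, h, b => by
    simp only [trA, SLfree, Set.mem_insert_iff]
    rintro (hx | hx)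
    · obtain ⟨v, rfl⟩ := Sum.isLeft_iff.mp h.1
      cases hx
    · exact trA_no_fresh φ (A.erase a) h.2 b hx
  | .unbind a φ, A, h, b => trA_no_fresh φ (insert a A) h b
  | .pathE ψ, A, h, b => by
    intro hx
    have h1 := SLfree_quantList A.toList (bindList A.toList (trAP A ψ)) hx
    obtain ⟨h2, h3⟩ := h1
    rcases SLfree_bindList A.toList (trAP A ψ) h2 with hmem | hmem
    · exact h3 hmem
    · exact trAP_no_fresh ψ A h b hmem

theorem trAP_no_fresh : ∀ (ψ : BSLPath AP Ag (Var ⊕ Ag)) (A : Finset Ag),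
    BSLavoidsFreshP ψ → ∀ b : Ag, (Sum.inr b : Var ⊕ Ag) ∉ SLfree (trAP A ψ)
  | .state φ, A, h, b => trA_no_fresh φ A h b
  | .neg ψ, A, h, b => trAP_no_fresh ψ A h b
  | .or ψ ψ', A, h, b => by
    simp only [trAP, SLfree, Set.mem_union]
    rintro (hx | hx)
    · exact trAP_no_fresh ψ A h.1 b hx
    · exact trAP_no_fresh ψ' A h.2 b hx
  | .next ψ, A, h, b => trAP_no_fresh ψ A h b
  | .untl ψ ψ', A, h, b => by
    simp only [trAP, SLfree, Set.mem_union]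
    rintro (hx | hx)
    · exact trAP_no_fresh ψ A h.1 b hx
    · exact trAP_no_fresh ψ' A h.2 b hx
end

end Lemmas4

section Lemmas5

variable [DecidableEq S] [DecidableEq Ag] [DecidableEq Var]
variable (G : CGS S Ag Act AP)

/-- Apply the bindings `(a, x_a)` for `a ∈ l` to an assignment. -/
def bindApply (χ : Assign S Ag Act (Var ⊕ Ag)) (l : List Ag) : Assign S Ag Act (Var ⊕ Ag) :=
  fun s => match s with
  | .inl a => if a ∈ l then χ (Sum.inr (Sum.inr a)) else χ (Sum.inl a)
  | .inr x => χ (Sum.inr x)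

/-- Store the strategies `τ a` in the fresh variables `x_a`, `a ∈ l`. -/
def quantApply (χ : Assign S Ag Act (Var ⊕ Ag)) (l : List Ag) (τ : Ag → Strat S Ag Act) :
    Assign S Ag Act (Var ⊕ Ag) :=
  fun s => match s with
  | .inr (.inr a) => if a ∈ l then some (τ a) else χ s
  | _ => χ s

/-- The result of quantifying and binding over `l`. -/
def pushL (χ : Assign S Ag Act (Var ⊕ Ag)) (l : List Ag) (τ : Ag → Strat S Ag Act) :
    Assign S Ag Act (Var ⊕ Ag) :=
  fun s => match s with
  | .inl a => if a ∈ l then some (τ a) else χ (Sum.inl a)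
  | .inr (.inr a) => if a ∈ l then some (τ a) else χ s
  | .inr (.inl v) => χ s

lemma bindApply_eq_pushL (χ : Assign S Ag Act (Var ⊕ Ag)) (l : List Ag)
    (τ : Ag → Strat S Ag Act) :
    bindApply (quantApply χ l τ) l = pushL χ l τ := by
  funext s
  rcases s with a | x
  · by_cases h : a ∈ l <;> simp [bindApply, quantApply, pushL, h]
  · rcases x with v | a
    · rfl
    · rfl

lemma SLsat_bindList (θ : SLForm AP Ag (Var ⊕ Ag)) (q : S) :
    ∀ (l : List Ag) (χ : Assign S Ag Act (Var ⊕ Ag)),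
    SLsat G χ q (bindList l θ) ↔ SLsat G (bindApply χ l) q θ := by
  intro l
  induction l with
  | nil =>
    intro χ
    have : bindApply χ [] = χ := by
      funext s; rcases s with a | x <;> simp [bindApply]
    rw [bindList, List.foldr_nil, this]
  | cons a l ih =>
    intro χ
    show SLsat G χ q (.bind a (Sum.inr a) (bindList l θ)) ↔ _
    rw [show SLsat G χ q (.bind a (Sum.inr a) (bindList l θ)) =
      SLsat G (Function.update χ (Sum.inl a) (χ (Sum.inr (Sum.inr a)))) q (bindList l θ)
      from rfl, ih]
    have : bindApply (Function.update χ (Sum.inl a) (χ (Sum.inr (Sum.inr a)))) l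
        = bindApply χ (a :: l) := by
      funext s
      rcases s with b | x
      · by_cases hb : b ∈ l
        · simp [bindApply, hb, Function.update_of_ne]
        · by_cases hba : b = a
          · subst hba
            simp [bindApply, hb, Function.update]
          · simp [bindApply, hb, hba, Function.update_of_ne (by simp [hba] : (Sum.inl b : Ag ⊕ (Var ⊕ Ag)) ≠ Sum.inl a)]
      · simp [bindApply, Function.update_of_ne]
    rw [this]

lemma SLsat_quantList (hne : Nonempty (Strat S Ag Act)) (θ : SLForm AP Ag (Var ⊕ Ag)) (q : S) :
    ∀ (l : List Ag), l.Nodup → ∀ (χ : Assign S Ag Act (Var ⊕ Ag)),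
    (SLsat G χ q (quantList l θ) ↔ ∃ τ : Ag → Strat S Ag Act, SLsat G (quantApply χ l τ) q θ) := by
  intro l
  induction l with
  | nil =>
    intro _ χ
    have h0 : ∀ τ, quantApply χ [] τ = χ := by
      intro τ; funext s
      rcases s with a | x
      · rfl
      · rcases x with v | a <;> simp [quantApply]
    rw [quantList, List.foldr_nil]
    constructor
    · intro h; exact ⟨fun _ => hne.some, by rwa [h0]⟩
    · rintro ⟨τ, hτ⟩; rwa [h0] at hτ
  | cons a l ih =>
    intro hnd χ
    have ha : a ∉ l := (List.nodup_cons.mp hnd).1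
    have hnd' := (List.nodup_cons.mp hnd).2
    show (∃ σ, SLsat G (Function.update χ (Sum.inr (Sum.inr a)) (some σ)) q (quantList l θ)) ↔ _
    constructor
    · rintro ⟨σ, hσ⟩
      obtain ⟨τ, hτ⟩ := (ih hnd' _).mp hσ
      refine ⟨Function.update τ a σ, ?_⟩
      have : quantApply (Function.update χ (Sum.inr (Sum.inr a)) (some σ)) l τ
          = quantApply χ (a :: l) (Function.update τ a σ) := by
        funext s
        rcases s with b | x
        · rfl
        · rcases x with v | b
          · rfl
          · by_cases hb : b ∈ l
            · have hba : b ≠ a := fun h => ha (h ▸ hb)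
              simp [quantApply, hb, Function.update_of_ne hba]
            · by_cases hba : b = a
              · subst hba
                simp [quantApply, hb, Function.update]
              · simp [quantApply, hb, hba,
                  Function.update_of_ne (by simp [hba] : (Sum.inr (Sum.inr b) : Ag ⊕ (Var ⊕ Ag)) ≠ Sum.inr (Sum.inr a))]
        
      rwa [this] at hτ
    · rintro ⟨τ, hτ⟩
      refine ⟨τ a, (ih hnd' _).mpr ⟨τ, ?_⟩⟩
      have : quantApply (Function.update χ (Sum.inr (Sum.inr a)) (some (τ a))) l τ
          = quantApply χ (a :: l) τ := by
        funext s
        rcases s with b | x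
        · rfl
        · rcases x with v | b
          · rfl
          · by_cases hb : b ∈ l
            · simp [quantApply, hb]
            · by_cases hba : b = a
              · subst hba
                simp [quantApply, hb, Function.update]
              · simp [quantApply, hb, hba,
                  Function.update_of_ne (by simp [hba] : (Sum.inr (Sum.inr b) : Ag ⊕ (Var ⊕ Ag)) ≠ Sum.inr (Sum.inr a))]
      rwa [this]

lemma SLsat_quantBind (hne : Nonempty (Strat S Ag Act)) (θ : SLForm AP Ag (Var ⊕ Ag)) (q : S) (l : List Ag)
    (hnd : l.Nodup) (χ : Assign S Ag Act (Var ⊕ Ag)) :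
    SLsat G χ q (quantList l (bindList l θ)) ↔
      ∃ τ : Ag → Strat S Ag Act, SLsat G (pushL χ l τ) q θ := by
  rw [SLsat_quantList G hne _ q l hnd χ]
  apply exists_congr
  intro τ
  rw [SLsat_bindList, bindApply_eq_pushL]

end Lemmas5

section Lemmas6

variable [DecidableEq S] [DecidableEq Ag] [DecidableEq Var]
variable (G : CGS S Ag Act AP)

theorem SLsat_trA_congr :
    ∀ (φ : BSLForm AP Ag (Var ⊕ Ag)) (A : Finset Ag) (χ χ' : Assign S Ag Act (Var ⊕ Ag)) (q : S),
    BSLavoidsFresh φ →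
    (∀ a ∉ A, restrictQ q χ (Sum.inl a) = restrictQ q χ' (Sum.inl a)) →
    (∀ v : Var, restrictQ q χ (Sum.inr (Sum.inl v)) = restrictQ q χ' (Sum.inr (Sum.inl v))) →
    (SLsat G χ q (trA A φ) ↔ SLsat G χ' q (trA A φ))
  | .atom p, A, χ, χ', q, h, hA, hV => Iff.rfl
  | .neg φ, A, χ, χ', q, h, hA, hV => by
    simp only [trA, SLsat]
    exact not_congr (SLsat_trA_congr φ A χ χ' q h hA hV)
  | .or φ φ', A, χ, χ', q, h, hA, hV => by
    simp only [trA, SLsat]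
    exact or_congr (SLsat_trA_congr φ A χ χ' q h.1 hA hV)
      (SLsat_trA_congr φ' A χ χ' q h.2 hA hV)
  | .exi x φ, A, χ, χ', q, h, hA, hV => by
    simp only [trA, SLsat]
    apply exists_congr; intro σ
    apply SLsat_trA_congr φ A _ _ q h.2
    · intro a ha
      rw [restrictQ_update, restrictQ_update,
        Function.update_of_ne (by simp), Function.update_of_ne (by simp)]
      exact hA a ha
    · intro v
      rw [restrictQ_update, restrictQ_update]
      by_cases hxv : (Sum.inr (Sum.inl v) : Ag ⊕ (Var ⊕ Ag)) = Sum.inr x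
      · rw [hxv]; simp
      · rw [Function.update_of_ne hxv, Function.update_of_ne hxv]
        exact hV v
  | .bind a x φ, A, χ, χ', q, h, hA, hV => by
    obtain ⟨v, rfl⟩ := Sum.isLeft_iff.mp h.1
    simp only [trA, SLsat]
    apply SLsat_trA_congr φ (A.erase a) _ _ q h.2
    · intro b hb
      by_cases hba : b = a
      · subst hba
        rw [restrictQ_update, restrictQ_update]
        simp only [Function.update_self]
        have hv := hV v
        rw [restrictQ, restrictQ] at hv
        rw [show ((χ (Sum.inr (Sum.inl v))).map fun σ tl => σ (q, tl))
          = ((χ' (Sum.inr (Sum.inl v))).map fun σ tl => σ (q, tl)) from hv]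
      · have hbA : b ∉ A := fun hmem => hb (Finset.mem_erase.mpr ⟨hba, hmem⟩)
        rw [restrictQ_update, restrictQ_update,
          Function.update_of_ne (by simp [hba] : (Sum.inl b : Ag ⊕ (Var ⊕ Ag)) ≠ Sum.inl a),
          Function.update_of_ne (by simp [hba] : (Sum.inl b : Ag ⊕ (Var ⊕ Ag)) ≠ Sum.inl a)]
        exact hA b hbA
    · intro w
      rw [restrictQ_update, restrictQ_update,
        Function.update_of_ne (by simp), Function.update_of_ne (by simp)]
      exact hV w
  | .unbind a φ, A, χ, χ', q, h, hA, hV => by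
    simp only [trA]
    apply SLsat_trA_congr φ (insert a A) χ χ' q h
    · intro b hb
      simp only [Finset.mem_insert, not_or] at hb
      exact hA b hb.2
    · exact hV
  | .pathE ψ, A, χ, χ', q, h, hA, hV => by
    simp only [trA]
    rcases hl : A.toList with _ | ⟨a, l⟩
    · have hA0 : A = ∅ := by rwa [← Finset.toList_eq_nil]
      show SLsat G χ q (trAP A ψ) ↔ SLsat G χ' q (trAP A ψ)
      apply SLsat_congr
      · intro b
        exact hA b (by simp [hA0])
      · intro x hx
        rcases x with w | b
        · exact hV w
        · exact absurd hx (trAP_no_fresh ψ A h b)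
    · by_cases hne : Nonempty (Strat S Ag Act)
      · rw [← hl, SLsat_quantBind G hne _ q A.toList (Finset.nodup_toList A) χ,
          SLsat_quantBind G hne _ q A.toList (Finset.nodup_toList A) χ']
        apply exists_congr; intro τ
        apply SLsat_congr
        · intro b
          by_cases hb : b ∈ A.toList
          · simp [restrictQ, pushL, hb]
          · have hbA : b ∉ A := fun hh => hb (Finset.mem_toList.mpr hh)
            simp only [restrictQ, pushL, if_neg hb]
            exact hA b hbA
        · intro x hx
          rcases x with w | b
          · exact hV w
          · exact absurd hx (trAP_no_fresh ψ A h b)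
      · simp only [quantList, List.foldr_cons, SLsat]
        constructor
        · rintro ⟨σ, -⟩; exact absurd ⟨σ⟩ hne
        · rintro ⟨σ, -⟩; exact absurd ⟨σ⟩ hne

end Lemmas6

section Lemmas7

variable [DecidableEq S] [DecidableEq Ag] [DecidableEq Var] [Fintype Ag]
variable (G : CGS S Ag Act AP)

lemma stateAt_zero (q : S) (d : ℕ → Ag → Act) : stateAt G q d 0 = q := by
  simp [stateAt, prefixPath, CGS.lastState]

lemma filter_isNone_congr (χ χ' : Assign S Ag Act (Var ⊕ Ag))
    (h : ∀ a, (χ (Sum.inl a)).isNone = (χ' (Sum.inl a)).isNone) :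
    (Finset.univ.filter fun a => (χ (Sum.inl a)).isNone)
      = (Finset.univ.filter fun a => (χ' (Sum.inl a)).isNone) := by
  apply Finset.filter_congr
  intro a _
  simp [h a]

lemma lastState_prefix_add (q : S) (d : ℕ → Ag → Act) (i j : ℕ) :
    G.lastState (prefixPath (stateAt G q d i) (fun k => d (i + k)) j)
      = G.lastState (prefixPath q d (i + j)) :=
  stateAt_add G q d i j

lemma shift_bridge (χ'' : Assign S Ag Act (Var ⊕ Ag)) (q : S) (d : ℕ → Ag → Act)
    (i j : ℕ) (F : SLForm AP Ag (Var ⊕ Ag)) :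
    SLsat G (transAssign G (prefixPath (stateAt G q d i) (fun k => d (i + k)) j)
        (transAssign G (prefixPath q d i) χ''))
      (stateAt G (stateAt G q d i) (fun k => d (i + k)) j) F
    ↔ SLsat G (transAssign G (prefixPath q d (i + j)) χ'') (stateAt G q d (i + j)) F := by
  have heq := restrictQ_transAssign_comp G (prefixPath q d i)
    (prefixPath (stateAt G q d i) (fun k => d (i + k)) j) χ'' rfl
  rw [prefixPath_concat q d i j (stateAt G q d i)] at heq
  rw [lastState_prefix_add G q d i j] at heq
  rw [show stateAt G (stateAt G q d i) (fun k => d (i + k)) j = stateAt G q d (i + j)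
    from stateAt_add G q d i j]
  apply SLsat_congr
  · intro a
    exact congrFun heq (Sum.inl a)
  · intro x _
    exact congrFun heq (Sum.inr x)

end Lemmas7

section Main

variable [DecidableEq S] [DecidableEq Ag] [DecidableEq Var] [Fintype Ag]
variable (G : CGS S Ag Act AP)

mutual

theorem BSLsat_iff :
    ∀ (φ : BSLForm AP Ag (Var ⊕ Ag)) (χ : Assign S Ag Act (Var ⊕ Ag)) (q : S),
    BSLavoidsFresh φ →
    (∀ x ∈ BSLfree φ, (χ (Sum.inr x)).isSome) →
    (BSLsat G χ q φ ↔
      SLsat G χ q (trA (Finset.univ.filter fun a => (χ (Sum.inl a)).isNone) φ))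
  | .atom p, χ, q, h, hf => Iff.rfl
  | .neg φ, χ, q, h, hf => by
    simp only [BSLsat, trA, SLsat]
    exact not_congr (BSLsat_iff φ χ q h hf)
  | .or φ φ', χ, q, h, hf => by
    simp only [BSLsat, trA, SLsat]
    exact or_congr
      (BSLsat_iff φ χ q h.1 fun x hx => hf x (Or.inl hx))
      (BSLsat_iff φ' χ q h.2 fun x hx => hf x (Or.inr hx))
  | .exi x φ, χ, q, h, hf => by
    simp only [BSLsat, trA, SLsat]
    apply exists_congr; intro σ
    have hset : (Finset.univ.filter fun a =>
          ((Function.update χ (Sum.inr x) (some σ)) (Sum.inl a)).isNone)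
        = (Finset.univ.filter fun a => (χ (Sum.inl a)).isNone) :=
      filter_isNone_congr _ _ fun a => by rw [Function.update_of_ne (by simp)]
    rw [← hset]
    apply BSLsat_iff φ _ q h.2
    intro y hy
    by_cases hxy : (Sum.inr y : Ag ⊕ (Var ⊕ Ag)) = Sum.inr x
    · rw [hxy]; simp
    · rw [Function.update_of_ne hxy]
      exact hf y ⟨hy, by simpa using hxy⟩
  | .bind a x φ, χ, q, h, hf => by
    simp only [BSLsat, trA, SLsat]
    have hx : (χ (Sum.inr x)).isSome := hf x (Set.mem_insert _ _)
    have hset : (Finset.univ.filter fun b =>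
          ((Function.update χ (Sum.inl a) (χ (Sum.inr x))) (Sum.inl b)).isNone)
        = (Finset.univ.filter fun b => (χ (Sum.inl b)).isNone).erase a := by
      ext b
      by_cases hba : b = a
      · subst hba
        simp [Function.update_self, Option.isNone_iff_eq_none,
          Option.isSome_iff_ne_none.mp hx]
      · simp [Function.update_of_ne (by simp [hba] : (Sum.inl b : Ag ⊕ (Var ⊕ Ag)) ≠ Sum.inl a), hba]
    rw [← hset]
    apply BSLsat_iff φ _ q h.2
    intro y hy
    rw [Function.update_of_ne (by simp)]
    exact hf y (Set.mem_insert_of_mem _ hy)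
  | .unbind a φ, χ, q, h, hf => by
    simp only [BSLsat, trA]
    have hset : (Finset.univ.filter fun b =>
          ((Function.update χ (Sum.inl a) none) (Sum.inl b)).isNone)
        = insert a (Finset.univ.filter fun b => (χ (Sum.inl b)).isNone) := by
      ext b
      by_cases hba : b = a
      · subst hba; simp [Function.update_self]
      · simp [Function.update_of_ne (by simp [hba] : (Sum.inl b : Ag ⊕ (Var ⊕ Ag)) ≠ Sum.inl a), hba]
    rw [← hset]
    rw [BSLsat_iff φ (Function.update χ (Sum.inl a) none) q h
      (fun y hy => by rw [Function.update_of_ne (by simp)]; exact hf y hy)]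
    apply SLsat_trA_congr G φ _ _ _ q h
    · intro b hb
      have hba : b ≠ a := by
        rintro rfl
        exact hb (by simp)
      simp only [restrictQ,
        Function.update_of_ne (show (Sum.inl b : Ag ⊕ (Var ⊕ Ag)) ≠ Sum.inl a by simp [hba])]
    · intro v
      simp only [restrictQ, Function.update_of_ne
        (show (Sum.inr (Sum.inl v) : Ag ⊕ (Var ⊕ Ag)) ≠ Sum.inl a by simp)]
  | .pathE ψ, χ, q, h, hf => by
    set A := (Finset.univ.filter fun a => (χ (Sum.inl a)).isNone) with hA
    have hmemA : ∀ a, a ∈ A ↔ (χ (Sum.inl a)).isNone := by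
      intro a; simp [hA]
    have hf' : ∀ x ∈ BSLfreeP ψ, (χ (Sum.inr x)).isSome :=
      fun x hx => hf x (by simpa [BSLfree] using hx)
    simp only [BSLsat, trA]
    rcases hl : A.toList with _ | ⟨a0, l0⟩
    · -- A = ∅ : χ is complete
      have hA0 : A = ∅ := by rwa [← Finset.toList_eq_nil]
      have hc : ∀ a, (χ (Sum.inl a)).isSome := by
        intro a
        have : ¬ (χ (Sum.inl a)).isNone := by
          intro hn
          have := (hmemA a).mpr hn
          simp [hA0] at this
        cases hχ : χ (Sum.inl a) with
        | none => exact absurd (by simp [hχ]) this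
        | some σ => rfl
      show (∃ d ∈ outcome G q χ, BSLsatP G χ q d 0 ψ) ↔ SLsat G χ q (trAP A ψ)
      constructor
      · rintro ⟨d, hd, hsat⟩
        have := (BSLsatP_iff ψ χ χ q d 0 h hf' hc (fun _ => rfl) (fun _ _ => rfl) hd).mp hsat
        rwa [transAssign_zero, stateAt_zero] at this
      · intro hsat
        obtain ⟨d, hd⟩ := outcome_exists G q χ hc
        refine ⟨d, hd, ?_⟩
        apply (BSLsatP_iff ψ χ χ q d 0 h hf' hc (fun _ => rfl) (fun _ _ => rfl) hd).mpr
        rwa [transAssign_zero, stateAt_zero]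
    · by_cases hne : Nonempty (Strat S Ag Act)
      · rw [← hl, SLsat_quantBind G hne _ q A.toList (Finset.nodup_toList A) χ]
        have hagree : ∀ (τ : Ag → Strat S Ag Act),
            (∀ a, ((pushL χ A.toList τ) (Sum.inl a)).isSome) ∧
            (∀ v, (pushL χ A.toList τ) (Sum.inr (Sum.inl v)) = χ (Sum.inr (Sum.inl v))) ∧
            (∀ a, ¬ (χ (Sum.inl a)).isNone = true → (pushL χ A.toList τ) (Sum.inl a) = χ (Sum.inl a)) := by
          intro τ
          refine ⟨?_, fun _ => rfl, ?_⟩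
          · intro a
            by_cases ha : a ∈ A.toList
            · simp [pushL, ha]
            · have : ¬ (χ (Sum.inl a)).isNone := by
                intro hn
                exact ha (Finset.mem_toList.mpr ((hmemA a).mpr hn))
              simp only [pushL, if_neg ha]
              cases hχ : χ (Sum.inl a) with
              | none => exact absurd (by simp [hχ]) this
              | some σ => rfl
          · intro a ha
            have : a ∉ A.toList := fun hmem => ha (by
              have := (hmemA a).mp (Finset.mem_toList.mp hmem); exact this)
            simp [pushL, this]
        have hfree' : ∀ (τ : Ag → Strat S Ag Act),
            ∀ x ∈ BSLfreeP ψ, ((pushL χ A.toList τ) (Sum.inr x)).isSome := by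
          intro τ x hx
          rcases x with v | b
          · rw [(hagree τ).2.1 v]; exact hf' (Sum.inl v) hx
          · by_cases hb : b ∈ A.toList
            · simp [pushL, hb]
            · simpa [pushL, hb] using hf' _ hx
        constructor
        · rintro ⟨d, hd, hsat⟩
          refine ⟨fun a => fun ρ => d ρ.2.length a, ?_⟩
          set τ : Ag → Strat S Ag Act := fun a => fun ρ => d ρ.2.length a with hτ
          have hd'' : d ∈ outcome G q (pushL χ A.toList τ) := by
            intro k b σ hσ
            by_cases hb : b ∈ A.toList
            · simp only [pushL, if_pos hb] at hσ
              cases hσ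
              show d k b = d (prefixPath q d k).2.length b
              rw [prefixPath_len]
            · simp only [pushL, if_neg hb] at hσ
              exact hd k b σ hσ
          have := (BSLsatP_iff ψ χ (pushL χ A.toList τ) q d 0 h hf'
            (hagree τ).1 (hagree τ).2.1 (hagree τ).2.2 hd'').mp hsat
          rwa [transAssign_zero, stateAt_zero] at this
        · rintro ⟨τ, hτ⟩
          obtain ⟨d, hd''⟩ := outcome_exists G q (pushL χ A.toList τ) (hagree τ).1
          have hd : d ∈ outcome G q χ := by
            intro k b σ hσ
            have hb : b ∉ A.toList := by
              intro hmem
              have := (hmemA b).mp (Finset.mem_toList.mp hmem)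
              simp [hσ] at this
            apply hd'' k b σ
            simp [pushL, hb, hσ]
          refine ⟨d, hd, ?_⟩
          apply (BSLsatP_iff ψ χ (pushL χ A.toList τ) q d 0 h hf'
            (hagree τ).1 (hagree τ).2.1 (hagree τ).2.2 hd'').mpr
          rwa [transAssign_zero, stateAt_zero]
      · -- no strategies at all: both sides are false
        have hAct : ¬ Nonempty Act := fun ⟨c⟩ => hne ⟨fun _ => c⟩
        constructor
        · rintro ⟨d, -, -⟩
          exact absurd ⟨d 0 a0⟩ hAct
        · intro hsat
          simp only [quantList, List.foldr_cons, SLsat] at hsat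
          obtain ⟨σ, -⟩ := hsat
          exact absurd ⟨σ⟩ hne

theorem BSLsatP_iff :
    ∀ (ψ : BSLPath AP Ag (Var ⊕ Ag)) (χ χ'' : Assign S Ag Act (Var ⊕ Ag)) (q : S)
      (d : ℕ → Ag → Act) (i : ℕ),
    BSLavoidsFreshP ψ →
    (∀ x ∈ BSLfreeP ψ, (χ (Sum.inr x)).isSome) →
    (∀ a, (χ'' (Sum.inl a)).isSome) →
    (∀ v, χ'' (Sum.inr (Sum.inl v)) = χ (Sum.inr (Sum.inl v))) →
    (∀ a, ¬ (χ (Sum.inl a)).isNone = true → χ'' (Sum.inl a) = χ (Sum.inl a)) →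
    d ∈ outcome G q χ'' →
    (BSLsatP G χ q d i ψ ↔
      SLsat G (transAssign G (prefixPath q d i) χ'') (stateAt G q d i)
        (trAP (Finset.univ.filter fun a => (χ (Sum.inl a)).isNone) ψ))
  | .state φ, χ, χ'', q, d, i, h, hfr, hc, hv, hag, hd => by
    simp only [BSLsatP, trAP]
    have hset : (Finset.univ.filter fun a =>
          ((transAssign G (prefixPath q d i) χ) (Sum.inl a)).isNone)
        = (Finset.univ.filter fun a => (χ (Sum.inl a)).isNone) :=
      filter_isNone_congr _ _ fun a => transAssign_isNone G _ χ (Sum.inl a)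
    rw [BSLsat_iff φ (transAssign G (prefixPath q d i) χ) (stateAt G q d i) h
      (fun x hx => by rw [transAssign_isSome]; exact hfr x hx), hset]
    apply SLsat_trA_congr G φ _ _ _ (stateAt G q d i) h
    · intro b hb
      have hbn : ¬ (χ (Sum.inl b)).isNone = true := by
        intro hn; exact hb (by simp [Option.isNone_iff_eq_none.mp hn])
      simp only [restrictQ, transAssign, hag b hbn]
    · intro v
      simp only [restrictQ, transAssign, hv v]
  | .neg ψ, χ, χ'', q, d, i, h, hfr, hc, hv, hag, hd => by
    simp only [BSLsatP, trAP, SLsat]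
    exact not_congr (BSLsatP_iff ψ χ χ'' q d i h hfr hc hv hag hd)
  | .or ψ ψ', χ, χ'', q, d, i, h, hfr, hc, hv, hag, hd => by
    simp only [BSLsatP, trAP, SLsat]
    exact or_congr
      (BSLsatP_iff ψ χ χ'' q d i h.1 (fun x hx => hfr x (Or.inl hx)) hc hv hag hd)
      (BSLsatP_iff ψ' χ χ'' q d i h.2 (fun x hx => hfr x (Or.inr hx)) hc hv hag hd)
  | .next ψ, χ, χ'', q, d, i, h, hfr, hc, hv, hag, hd => by
    simp only [BSLsatP, trAP, SLsat]
    have hc' : ∀ a, ((transAssign G (prefixPath q d i) χ'') (Sum.inl a)).isSome := by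
      intro a; rw [transAssign_isSome]; exact hc a
    have hshift := outcome_shift G q χ'' d hd i
    have huniq : ∀ d', d' ∈ outcome G (stateAt G q d i) (transAssign G (prefixPath q d i) χ'') →
        d' = fun k => d (i + k) :=
      fun d' hd' => outcome_unique G _ _ hc' d' _ hd' hshift
    constructor
    · intro hsat
      refine ⟨fun k => d (i + k), hshift, ?_⟩
      apply (shift_bridge G χ'' q d i 1 _).mpr
      exact (BSLsatP_iff ψ χ χ'' q d (i + 1) h hfr hc hv hag hd).mp hsat
    · rintro ⟨d', hd', hsat⟩
      rw [huniq d' hd'] at hsat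
      apply (BSLsatP_iff ψ χ χ'' q d (i + 1) h hfr hc hv hag hd).mpr
      exact (shift_bridge G χ'' q d i 1 _).mp hsat
  | .untl ψ ψ', χ, χ'', q, d, i, h, hfr, hc, hv, hag, hd => by
    simp only [BSLsatP, trAP, SLsat]
    have hc' : ∀ a, ((transAssign G (prefixPath q d i) χ'') (Sum.inl a)).isSome := by
      intro a; rw [transAssign_isSome]; exact hc a
    have hshift := outcome_shift G q χ'' d hd i
    have huniq : ∀ d', d' ∈ outcome G (stateAt G q d i) (transAssign G (prefixPath q d i) χ'') →
        d' = fun k => d (i + k) :=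
      fun d' hd' => outcome_unique G _ _ hc' d' _ hd' hshift
    constructor
    · rintro ⟨j, hij, hsat', hsat⟩
      refine ⟨fun k => d (i + k), hshift, j - i, ?_, ?_⟩
      · apply (shift_bridge G χ'' q d i (j - i) _).mpr
        rw [show i + (j - i) = j by omega]
        exact (BSLsatP_iff ψ' χ χ'' q d j h.2 (fun x hx => hfr x (Or.inr hx)) hc hv hag hd).mp hsat'
      · intro k hk
        apply (shift_bridge G χ'' q d i k _).mpr
        exact (BSLsatP_iff ψ χ χ'' q d (i + k) h.1 (fun x hx => hfr x (Or.inl hx)) hc hv hag hd).mp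
          (hsat (i + k) (by omega) (by omega))
    · rintro ⟨d', hd', j', hsat', hsat⟩
      rw [huniq d' hd'] at hsat' hsat
      refine ⟨i + j', by omega, ?_, ?_⟩
      · apply (BSLsatP_iff ψ' χ χ'' q d (i + j') h.2 (fun x hx => hfr x (Or.inr hx)) hc hv hag hd).mpr
        exact (shift_bridge G χ'' q d i j' _).mp hsat'
      · intro k hik hkj
        apply (BSLsatP_iff ψ χ χ'' q d k h.1 (fun x hx => hfr x (Or.inl hx)) hc hv hag hd).mpr
        have := (shift_bridge G χ'' q d i (k - i) _).mp (hsat (k - i) (by omega))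
        rwa [show i + (k - i) = k by omega] at this
end

end Main

/-- `G, χ, q ⊨_BSL φ` iff `G, χ, q ⊨_SL tr_{Ag ∖ dom(χ)}(φ)`. -/
theorem statement_7 [DecidableEq S] [DecidableEq Ag] [DecidableEq Var] [Fintype Ag]
    (G : CGS S Ag Act AP) (q : S)
    (φ : BSLForm AP Ag (Var ⊕ Ag)) (havoid : BSLavoidsFresh φ)
    (χ : Assign S Ag Act (Var ⊕ Ag))
    (hfor : ∀ x ∈ BSLfree φ, (χ (Sum.inr x)).isSome) :
    BSLsat G χ q φ ↔
      SLsat G χ q (trA (Finset.univ.filter fun a => (χ (Sum.inl a)).isNone) φ) :=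
  BSLsat_iff G φ χ q havoid hfor
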